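/- arXiv:1407.2812 — 2 statements merged into one kernel-verified Lean document; each statement's English description precedes it below -/
import Mathlib

section
/- Let X₁, ..., X_m be i.i.d. standard normal random variables and let T = Σ X_i². Then for every x > 0, P(T ≥ m + 2√(mx) + 2x) ≤ e^{-x}. -/
open MeasureTheory ProbabilityTheory

lemma neg_log_one_sub_le {u : ℝ} (hu0 : 0 ≤ u) (hu1 : u < 1) :
    -Real.log (1 - u) ≤ u + u ^ 2 / (2 * (1 - u)) := by
  classical
  have h1 : HasSum (fun n : ℕ => u ^ (n + 1) / (n + 1)) (-Real.log (1 - u)) :=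
    Real.hasSum_pow_div_log_of_abs_lt_one (by rwa [abs_of_nonneg hu0])
  set g : ℕ → ℝ := fun n => if n = 0 then u else u ^ (n + 1) / 2 with hg
  have h2 : HasSum (fun n : ℕ => g (n + 1)) (u ^ 2 / 2 * (1 - u)⁻¹) := by
    have hgeom : HasSum (fun n : ℕ => u ^ 2 / 2 * u ^ n) (u ^ 2 / 2 * (1 - u)⁻¹) :=
      (hasSum_geometric_of_lt_one hu0 hu1).mul_left _
    refine HasSum.congr_fun hgeom fun n => ?_
    simp only [hg, Nat.succ_ne_zero, if_false]
    ring
  have h3 : HasSum g (u ^ 2 / 2 * (1 - u)⁻¹ + ∑ i ∈ Finset.range 1, g i) :=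
    (hasSum_nat_add_iff 1).mp h2
  have h4 : -Real.log (1 - u) ≤ u ^ 2 / 2 * (1 - u)⁻¹ + ∑ i ∈ Finset.range 1, g i := by
    refine hasSum_le (fun n => ?_) h1 h3
    cases n with
    | zero => simp [hg]
    | succ k =>
      simp only [hg, Nat.succ_ne_zero, if_false]
      have hnum : (0:ℝ) ≤ u ^ (k + 1 + 1) := pow_nonneg hu0 _
      have hden : (2:ℝ) ≤ (k + 1 : ℕ) + 1 := by push_cast; linarith [Nat.cast_nonneg (α := ℝ) k]
      exact div_le_div_of_nonneg_left hnum (by norm_num) hden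
  have h5 : ∑ i ∈ Finset.range 1, g i = u := by simp [hg]
  rw [h5] at h4
  have h1u : (0:ℝ) < 1 - u := by linarith
  refine h4.trans_eq ?_
  field_simp
  ring

lemma gaussian_exp_sq {t : ℝ} (ht : t < 1/2) :
    Integrable (fun y : ℝ => Real.exp (t * y ^ 2)) (gaussianReal 0 1) ∧
    ∫ y, Real.exp (t * y ^ 2) ∂(gaussianReal 0 1) = (Real.sqrt (1 - 2 * t))⁻¹ := by
  have hb : (0:ℝ) < 1/2 - t := by linarith
  have hpdf : ∀ y : ℝ, gaussianPDFReal 0 1 y * Real.exp (t * y ^ 2)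
      = (Real.sqrt (2 * Real.pi))⁻¹ * Real.exp (-(1/2 - t) * y ^ 2) := by
    intro y
    simp only [gaussianPDFReal, NNReal.coe_one, mul_one, sub_zero]
    rw [mul_assoc, ← Real.exp_add]
    congr 1
    ring
  have hmeas : Measurable fun y : ℝ => (gaussianPDFReal 0 1 y).toNNReal :=
    (measurable_gaussianPDFReal 0 1).real_toNNReal
  have hg : Integrable (fun y : ℝ => gaussianPDFReal 0 1 y * Real.exp (t * y ^ 2)) := by
    have h := (integrable_exp_neg_mul_sq hb).const_mul (Real.sqrt (2 * Real.pi))⁻¹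
    simpa only [← hpdf] using h
  have hd : gaussianReal 0 1
      = MeasureTheory.volume.withDensity fun y => ((gaussianPDFReal 0 1 y).toNNReal : ENNReal) := by
    rw [gaussianReal_of_var_ne_zero 0 one_ne_zero]
    congr 1
  have hsmul : ∀ y : ℝ, (gaussianPDFReal 0 1 y).toNNReal • Real.exp (t * y ^ 2)
      = gaussianPDFReal 0 1 y * Real.exp (t * y ^ 2) := by
    intro y
    rw [NNReal.smul_def, Real.coe_toNNReal _ (gaussianPDFReal_nonneg 0 1 y), smul_eq_mul]
  constructor
  · rw [hd, integrable_withDensity_iff_integrable_smul hmeas]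
    exact hg.congr (Filter.Eventually.of_forall fun y => (hsmul y).symm)
  · rw [hd, integral_withDensity_eq_integral_smul hmeas]
    simp_rw [hsmul, hpdf]
    rw [MeasureTheory.integral_const_mul, integral_gaussian]
    rw [← Real.sqrt_inv, ← Real.sqrt_mul (by positivity : (0:ℝ) ≤ (2 * Real.pi)⁻¹),
      show (2 * Real.pi)⁻¹ * (Real.pi / (1/2 - t)) = (1 - 2 * t)⁻¹ by
        have h1 : (1:ℝ) - 2 * t ≠ 0 := by linarith
        have h2 : Real.pi ≠ 0 := Real.pi_ne_zero
        field_simp, Real.sqrt_inv]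

theorem chisq_upper_tail {Ω : Type*} [MeasureSpace Ω] [IsProbabilityMeasure (ℙ : Measure Ω)]
    (m : ℕ) (X : Fin m → Ω → ℝ)
    (hindep : iIndepFun X ℙ)
    (hX : ∀ i, Measure.map (X i) ℙ = gaussianReal 0 1)
    (x : ℝ) (hx : 0 < x) :
    ℙ {ω | (m : ℝ) + 2 * Real.sqrt (m * x) + 2 * x ≤ ∑ i, (X i ω) ^ 2}
      ≤ ENNReal.ofReal (Real.exp (-x)) := by
  classical
  rcases Nat.eq_zero_or_pos m with hm | hm
  · subst hm
    have : {ω : Ω | (0 : ℕ) + 2 * Real.sqrt ((0:ℕ) * x) + 2 * x ≤ ∑ i : Fin 0, (X i ω) ^ 2} = ∅ := by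
      ext ω
      simp only [Set.mem_setOf_eq, Set.mem_empty_iff_false, iff_false, not_le,
        Finset.univ_eq_empty, Finset.sum_empty, Nat.cast_zero, zero_mul, Real.sqrt_zero,
        mul_zero, zero_add]
      linarith
    rw [this]
    simp
  -- measurable versions of the X i
  have hXae : ∀ i, AEMeasurable (X i) ℙ := by
    intro i
    by_contra h
    have h0 := Measure.map_of_not_aemeasurable h
    rw [hX i] at h0
    have := IsProbabilityMeasure.ne_zero (gaussianReal 0 1)
    exact this h0
  set X' : Fin m → Ω → ℝ := fun i => (hXae i).mk (X i) with hX'def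
  have hX'meas : ∀ i, Measurable (X' i) := fun i => (hXae i).measurable_mk
  have hX'ae : ∀ i, X i =ᵐ[ℙ] X' i := fun i => (hXae i).ae_eq_mk
  have hX'map : ∀ i, Measure.map (X' i) ℙ = gaussianReal 0 1 := by
    intro i
    rw [← Measure.map_congr (hX'ae i)]
    exact hX i
  have haeAll : ∀ᵐ ω ∂(ℙ : Measure Ω), ∀ i, X i ω = X' i ω := ae_all_iff.2 hX'ae
  have hindep' : iIndepFun X' ℙ := by
    rw [iIndepFun_iff_measure_inter_preimage_eq_mul] at hindep ⊢
    intro S sets hsets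
    have h1 : ∀ i, (ℙ : Measure Ω) (X' i ⁻¹' sets i) = ℙ (X i ⁻¹' sets i) := by
      intro i
      refine measure_congr ?_
      filter_upwards [hX'ae i] with ω hω
      show (X' i ω ∈ sets i) = (X i ω ∈ sets i)
      rw [hω]
    have h2 : (ℙ : Measure Ω) (⋂ i ∈ S, X' i ⁻¹' sets i) = ℙ (⋂ i ∈ S, X i ⁻¹' sets i) := by
      refine measure_congr ?_
      filter_upwards [haeAll] with ω hω
      show (ω ∈ ⋂ i ∈ S, X' i ⁻¹' sets i) = (ω ∈ ⋂ i ∈ S, X i ⁻¹' sets i)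
      simp only [eq_iff_iff, Set.mem_iInter, Set.mem_preimage, hω]
    rw [h2, hindep S hsets]
    exact Finset.prod_congr rfl fun i _ => (h1 i).symm
  -- replace X by X' in the event
  have hevent : ℙ {ω | (m : ℝ) + 2 * Real.sqrt (m * x) + 2 * x ≤ ∑ i, (X i ω) ^ 2}
      = ℙ {ω | (m : ℝ) + 2 * Real.sqrt (m * x) + 2 * x ≤ ∑ i, (X' i ω) ^ 2} := by
    refine measure_congr ?_
    filter_upwards [haeAll] with ω hω
    show ((m : ℝ) + 2 * Real.sqrt (m * x) + 2 * x ≤ ∑ i, (X i ω) ^ 2)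
        = ((m : ℝ) + 2 * Real.sqrt (m * x) + 2 * x ≤ ∑ i, (X' i ω) ^ 2)
    simp only [eq_iff_iff, hω]
  rw [hevent]
  -- set up constants
  set s : ℝ := Real.sqrt m with hsdef
  set r : ℝ := Real.sqrt x with hrdef
  have hs : 0 < s := Real.sqrt_pos.mpr (by exact_mod_cast hm)
  have hr : 0 < r := Real.sqrt_pos.mpr hx
  have hs2 : s ^ 2 = m := Real.sq_sqrt (Nat.cast_nonneg m)
  have hr2 : r ^ 2 = x := Real.sq_sqrt hx.le
  have hsr : Real.sqrt ((m : ℝ) * x) = s * r := Real.sqrt_mul (Nat.cast_nonneg m) x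
  set θ : ℝ := r / (s + 2 * r) with hθdef
  have hden : 0 < s + 2 * r := by linarith
  have hθ0 : 0 < θ := div_pos hr hden
  have hθhalf : θ < 1 / 2 := by
    rw [div_lt_iff₀ hden]
    linarith
  have h1u : 0 < 1 - 2 * θ := by linarith
  set c : ℝ := (m : ℝ) + 2 * Real.sqrt ((m : ℝ) * x) + 2 * x with hcdef
  -- the squared variables
  set Y : Fin m → Ω → ℝ := fun i ω => (X' i ω) ^ 2 with hYdef
  have hYmeas : ∀ i, Measurable (Y i) := fun i => (hX'meas i).pow_const 2
  have hYindep : iIndepFun Y ℙ :=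
    hindep'.comp (fun _ y => y ^ 2) (fun _ => measurable_id.pow_const 2)
  -- integrability and mgf of each Y i
  have hexp_cont : Continuous fun y : ℝ => Real.exp (θ * y ^ 2) := by continuity
  have hint : ∀ i, Integrable (fun ω => Real.exp (θ * Y i ω)) ℙ := by
    intro i
    have h := (gaussian_exp_sq hθhalf).1
    rw [← hX'map i] at h
    exact (integrable_map_measure hexp_cont.aestronglyMeasurable
      (hX'meas i).aemeasurable).mp h
  have hmgf : ∀ i, mgf (Y i) ℙ θ = (Real.sqrt (1 - 2 * θ))⁻¹ := by
    intro i
    have h := (gaussian_exp_sq hθhalf).2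
    rw [← hX'map i, integral_map (hX'meas i).aemeasurable hexp_cont.aestronglyMeasurable] at h
    exact h
  -- Chernoff bound
  have hintsum : Integrable (fun ω => Real.exp (θ * (∑ i, Y i) ω)) ℙ :=
    hYindep.integrable_exp_mul_sum hYmeas fun i _ => hint i
  have hchernoff := measure_ge_le_exp_mul_mgf (X := ∑ i, Y i) (μ := ℙ) (t := θ) c hθ0.le hintsum
  have hmgfsum : mgf (∑ i, Y i) ℙ θ = ((Real.sqrt (1 - 2 * θ))⁻¹) ^ m := by
    rw [hYindep.mgf_sum hYmeas]
    simp [hmgf]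
  -- the numeric bound
  have hlog : -Real.log (1 - 2 * θ) ≤ 2 * θ + (2 * θ) ^ 2 / (2 * (1 - 2 * θ)) :=
    neg_log_one_sub_le (by linarith) (by linarith)
  have hpow : ((Real.sqrt (1 - 2 * θ))⁻¹) ^ m
      = Real.exp (-((m : ℝ) / 2) * Real.log (1 - 2 * θ)) := by
    rw [Real.sqrt_eq_rpow, ← Real.rpow_neg_one, ← Real.rpow_natCast (((1 - 2*θ) ^ ((1:ℝ)/2)) ^ (-1:ℝ)) m,
      ← Real.rpow_mul h1u.le, ← Real.rpow_mul (by positivity), Real.rpow_def_of_pos h1u]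
    ring_nf
  have hkey : -(θ * c) + ((m : ℝ) / 2) * (2 * θ + (2 * θ) ^ 2 / (2 * (1 - 2 * θ))) = -x := by
    have h1u' : 1 - 2 * θ = s / (s + 2 * r) := by
      rw [hθdef]
      field_simp
      ring
    rw [hcdef, hsr, ← hs2, ← hr2, h1u', hθdef]
    field_simp
    ring
  have hexp_le : Real.exp (-θ * c) * ((Real.sqrt (1 - 2 * θ))⁻¹) ^ m ≤ Real.exp (-x) := by
    rw [hpow, ← Real.exp_add]
    apply Real.exp_le_exp.mpr
    have : -((m : ℝ) / 2) * Real.log (1 - 2 * θ) = ((m : ℝ) / 2) * (-Real.log (1 - 2 * θ)) := by ring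
    rw [this]
    have hmul : ((m : ℝ) / 2) * (-Real.log (1 - 2 * θ))
        ≤ ((m : ℝ) / 2) * (2 * θ + (2 * θ) ^ 2 / (2 * (1 - 2 * θ))) := by
      apply mul_le_mul_of_nonneg_left hlog (by positivity)
    nlinarith [hkey]
  -- conclude
  have hfin : ℙ {ω | c ≤ ∑ i, (X' i ω) ^ 2} ≠ ⊤ := measure_ne_top _ _
  rw [show {ω | (m : ℝ) + 2 * Real.sqrt ((m:ℝ) * x) + 2 * x ≤ ∑ i, (X' i ω) ^ 2}
      = {ω | c ≤ (∑ i, Y i) ω} by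
    ext ω
    simp only [Set.mem_setOf_eq, hcdef, Finset.sum_apply, hYdef]]
  refine (ENNReal.le_ofReal_iff_toReal_le (measure_ne_top _ _) (Real.exp_nonneg _)).mpr ?_
  calc (ℙ {ω | c ≤ (∑ i, Y i) ω}).toReal
      ≤ Real.exp (-θ * c) * mgf (∑ i, Y i) ℙ θ := hchernoff
    _ = Real.exp (-θ * c) * ((Real.sqrt (1 - 2 * θ))⁻¹) ^ m := by rw [hmgfsum]
    _ ≤ Real.exp (-x) := hexp_le
end

section
/- Let h₀ be the N(0, I_n) density on ℝⁿ and, for j = 1, ..., K with Kd ≤ n, let h_j be the density of N(μ^{(j)}, I_n) where μ^{(j)} has entries μ^{(j)}_i = γ f₀((i - (j-1)d)/d) for (j-1)d < i ≤ jd and 0 otherwise. Let g = K^{-1} Σ_{j=1}^K h_j. Then ∫ g²/h₀ = 1 + K^{-1} (exp(γ² Σ_{i=1}^d f₀(i/d)²) - 1). -/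
open MeasureTheory

/-- The density of `N(μ, I_n)` with respect to Lebesgue measure on `ℝⁿ`. -/
noncomputable def gaussDensity (n : ℕ) (μ x : EuclideanSpace ℝ (Fin n)) : ℝ :=
  (2 * Real.pi) ^ (-(n : ℝ) / 2) * Real.exp (-‖x - μ‖ ^ 2 / 2)

/-- The mean vector placing the signal `γ f₀` on the `j`-th (0-indexed) block of length `d`. -/
noncomputable def signalMean (n d : ℕ) (γ : ℝ) (f₀ : ℝ → ℝ) (j : ℕ) :
    EuclideanSpace ℝ (Fin n) :=
  WithLp.toLp 2 fun i : Fin n =>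
    if j * d ≤ (i : ℕ) ∧ (i : ℕ) < (j + 1) * d then
      γ * f₀ (((i : ℕ) - j * d + 1) / d) else 0

open Real
open scoped RealInnerProductSpace

lemma integrable_gaussAux (n : ℕ) :
    Integrable (fun x : EuclideanSpace ℝ (Fin n) => Real.exp (-‖x‖ ^ 2 / 2)) := by
  have h := (GaussianFourier.integrable_cexp_neg_mul_sq_norm_add
    (b := (1/2 : ℂ)) (by norm_num) 0 (0 : EuclideanSpace ℝ (Fin n))).norm
  convert h using 2 with x
  rw [Complex.norm_exp]
  congr 1
  simp [← Complex.ofReal_pow]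
  ring

lemma integrable_gaussDensity (n : ℕ) (μ : EuclideanSpace ℝ (Fin n)) :
    Integrable (gaussDensity n μ) := by
  unfold gaussDensity
  exact ((integrable_gaussAux n).comp_sub_right μ).const_mul _

lemma integral_gaussDensity (n : ℕ) (μ : EuclideanSpace ℝ (Fin n)) :
    ∫ x, gaussDensity n μ x = 1 := by
  unfold gaussDensity
  rw [integral_const_mul]
  have h1 : (∫ x : EuclideanSpace ℝ (Fin n), Real.exp (-‖x - μ‖ ^ 2 / 2))
      = ∫ x : EuclideanSpace ℝ (Fin n), Real.exp (-(1/2) * ‖x‖ ^ 2) := by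
    rw [← integral_sub_right_eq_self (μ := volume)
      (fun y : EuclideanSpace ℝ (Fin n) => Real.exp (-(1/2) * ‖y‖ ^ 2)) μ]
    congr 1; funext x; ring_nf
  rw [h1, GaussianFourier.integral_rexp_neg_mul_sq_norm (by norm_num : (0:ℝ) < 1/2),
    finrank_euclideanSpace_fin]
  have : ((π : ℝ) / (1/2)) = 2 * π := by ring
  rw [this, ← Real.rpow_add (by positivity)]
  rw [show (-(n:ℝ)/2 + (n:ℝ)/2) = 0 by ring, Real.rpow_zero]

lemma gaussDensity_cross (n : ℕ) (μ ν x : EuclideanSpace ℝ (Fin n)) :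
    gaussDensity n μ x * gaussDensity n ν x / gaussDensity n 0 x
      = Real.exp ⟪μ, ν⟫ * gaussDensity n (μ + ν) x := by
  unfold gaussDensity
  have hc : (0:ℝ) < (2 * Real.pi) ^ (-(n : ℝ) / 2) := by positivity
  rw [div_eq_iff (by positivity)]
  have key : -‖x - μ‖ ^ 2 / 2 + -‖x - ν‖ ^ 2 / 2
      = (⟪μ, ν⟫ + -‖x - (μ + ν)‖ ^ 2 / 2) + -‖x - 0‖ ^ 2 / 2 := by
    rw [sub_zero]
    have e1 : ‖x - μ‖ ^ 2 = ‖x‖ ^ 2 - 2 * ⟪x, μ⟫ + ‖μ‖ ^ 2 := norm_sub_sq_real x μ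
    have e2 : ‖x - ν‖ ^ 2 = ‖x‖ ^ 2 - 2 * ⟪x, ν⟫ + ‖ν‖ ^ 2 := norm_sub_sq_real x ν
    have e3 : ‖x - (μ + ν)‖ ^ 2 = ‖x‖ ^ 2 - 2 * ⟪x, μ + ν⟫ + ‖μ + ν‖ ^ 2 :=
      norm_sub_sq_real x (μ + ν)
    have e4 : ‖μ + ν‖ ^ 2 = ‖μ‖ ^ 2 + 2 * ⟪μ, ν⟫ + ‖ν‖ ^ 2 := norm_add_sq_real μ ν
    have e5 : ⟪x, μ + ν⟫ = ⟪x, μ⟫ + ⟪x, ν⟫ := inner_add_right x μ ν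
    rw [e1, e2, e3, e4, e5]; ring
  have h : Real.exp (-‖x - μ‖ ^ 2 / 2) * Real.exp (-‖x - ν‖ ^ 2 / 2)
      = Real.exp ⟪μ, ν⟫ * Real.exp (-‖x - (μ + ν)‖ ^ 2 / 2) * Real.exp (-‖x - 0‖ ^ 2 / 2) := by
    rw [← Real.exp_add, ← Real.exp_add, ← Real.exp_add]
    exact congrArg Real.exp key
  linear_combination ((2 * Real.pi) ^ (-(n:ℝ) / 2))^2 * h

lemma signalMean_apply (n d : ℕ) (γ : ℝ) (f₀ : ℝ → ℝ) (j : ℕ) (i : Fin n) :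
    signalMean n d γ f₀ j i =
      if j * d ≤ (i : ℕ) ∧ (i : ℕ) < (j + 1) * d then
        γ * f₀ ((((i:ℕ):ℝ) - (j:ℝ) * (d:ℝ) + 1) / (d:ℝ)) else 0 := rfl

lemma inner_signalMean_ne (n d : ℕ) (γ : ℝ) (f₀ : ℝ → ℝ) (j j' : ℕ) (hne : j ≠ j') :
    ⟪signalMean n d γ f₀ j, signalMean n d γ f₀ j'⟫ = 0 := by
  rw [PiLp.inner_apply]
  refine Finset.sum_eq_zero fun i _ => ?_
  simp only [RCLike.inner_apply, conj_trivial, signalMean_apply]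
  by_cases h1 : j * d ≤ (i:ℕ) ∧ (i:ℕ) < (j + 1) * d
  · by_cases h2 : j' * d ≤ (i:ℕ) ∧ (i:ℕ) < (j' + 1) * d
    · exfalso
      rcases lt_or_gt_of_ne hne with h | h
      · exact ((h1.2.trans_le (Nat.mul_le_mul_right d h)).trans_le h2.1).ne rfl
      · exact ((h2.2.trans_le (Nat.mul_le_mul_right d h)).trans_le h1.1).ne rfl
    · rw [if_neg h2, zero_mul]
  · rw [if_neg h1, mul_zero]

lemma inner_signalMean_self (n d K : ℕ) (hd : 0 < d) (γ : ℝ) (f₀ : ℝ → ℝ) (j : ℕ)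
    (hj : j < K) (hKd : K * d ≤ n) :
    ⟪signalMean n d γ f₀ j, signalMean n d γ f₀ j⟫
      = γ ^ 2 * ∑ i ∈ Finset.range d, f₀ (((i : ℝ) + 1) / d) ^ 2 := by
  rw [PiLp.inner_apply]
  simp only [RCLike.inner_apply, conj_trivial, signalMean_apply]
  have hsub : (j + 1) * d ≤ n := le_trans (Nat.mul_le_mul_right d hj) hKd
  set F : ℕ → ℝ := fun i => (if j * d ≤ i ∧ i < (j + 1) * d then
        γ * f₀ ((((i:ℕ):ℝ) - (j:ℝ) * (d:ℝ) + 1) / (d:ℝ)) else 0) *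
      (if j * d ≤ i ∧ i < (j + 1) * d then
        γ * f₀ ((((i:ℕ):ℝ) - (j:ℝ) * (d:ℝ) + 1) / (d:ℝ)) else 0) with hF
  have h1 : (∑ i : Fin n, F (i : ℕ)) = ∑ i ∈ Finset.range n, F i :=
    Fin.sum_univ_eq_sum_range F n
  have h2 : (∑ i ∈ Finset.range n, F i)
      = ∑ i ∈ Finset.Ico (j * d) ((j + 1) * d), F i := by
    refine (Finset.sum_subset (fun x hx => Finset.mem_range.mpr
      (lt_of_lt_of_le (Finset.mem_Ico.mp hx).2 hsub)) fun i _ hi => ?_).symm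
    rw [hF]
    simp only
    rw [if_neg (by simpa [Finset.mem_Ico] using hi), zero_mul]
  have h3 : (∑ i ∈ Finset.Ico (j * d) ((j + 1) * d), F i)
      = ∑ t ∈ Finset.range d, F (j * d + t) := by
    have hdd : (j + 1) * d = j * d + d := by ring
    rw [hdd, Finset.sum_Ico_eq_sum_range, Nat.add_sub_cancel_left]
  calc (∑ i : Fin n, F (i : ℕ)) = ∑ t ∈ Finset.range d, F (j * d + t) := by
        rw [h1, h2, h3]
    _ = γ ^ 2 * ∑ i ∈ Finset.range d, f₀ (((i : ℝ) + 1) / d) ^ 2 := by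
        rw [Finset.mul_sum]
        refine Finset.sum_congr rfl fun t ht => ?_
        have htd : t < d := Finset.mem_range.mp ht
        rw [hF]
        simp only
        rw [if_pos ⟨Nat.le_add_right _ _, by rw [add_mul, one_mul]; omega⟩]
        have harg : ((((j * d + t : ℕ)):ℝ) - (j:ℝ) * (d:ℝ) + 1) / (d:ℝ) = ((t:ℝ) + 1) / d := by
          push_cast; ring_nf
        rw [harg]; ring

theorem known_shape_affinity (n d K : ℕ) (hd : 0 < d) (hK : 0 < K) (hKd : K * d ≤ n)
    (γ : ℝ) (f₀ : ℝ → ℝ) :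
    ∫ x, ((K : ℝ)⁻¹ * ∑ j ∈ Finset.range K, gaussDensity n (signalMean n d γ f₀ j) x) ^ 2 /
        gaussDensity n 0 x
      = 1 + (K : ℝ)⁻¹ *
          (Real.exp (γ ^ 2 * ∑ i ∈ Finset.range d, f₀ (((i : ℝ) + 1) / d) ^ 2) - 1) := by
  set μ : ℕ → EuclideanSpace ℝ (Fin n) := signalMean n d γ f₀ with hμ
  set S : ℝ := γ ^ 2 * ∑ i ∈ Finset.range d, f₀ (((i : ℝ) + 1) / d) ^ 2 with hS
  have hpt : ∀ x, ((K : ℝ)⁻¹ * ∑ j ∈ Finset.range K, gaussDensity n (μ j) x) ^ 2 /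
        gaussDensity n 0 x
      = ∑ j ∈ Finset.range K, ∑ j' ∈ Finset.range K,
          ((K:ℝ)⁻¹ * (K:ℝ)⁻¹ * Real.exp ⟪μ j, μ j'⟫) * gaussDensity n (μ j + μ j') x := by
    intro x
    rw [mul_pow, sq (∑ j ∈ Finset.range K, gaussDensity n (μ j) x), Finset.sum_mul_sum,
      mul_div_assoc, Finset.sum_div, Finset.mul_sum]
    refine Finset.sum_congr rfl fun j _ => ?_
    rw [Finset.sum_div, Finset.mul_sum]
    refine Finset.sum_congr rfl fun j' _ => ?_
    rw [gaussDensity_cross]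
    ring
  simp_rw [hpt]
  rw [integral_finset_sum _ (fun j _ => integrable_finset_sum _
    (fun j' _ => ((integrable_gaussDensity n _).const_mul _)))]
  have : ∀ j ∈ Finset.range K,
      (∫ x, ∑ j' ∈ Finset.range K,
        ((K:ℝ)⁻¹ * (K:ℝ)⁻¹ * Real.exp ⟪μ j, μ j'⟫) * gaussDensity n (μ j + μ j') x)
      = ∑ j' ∈ Finset.range K, (K:ℝ)⁻¹ * (K:ℝ)⁻¹ * Real.exp ⟪μ j, μ j'⟫ := by
    intro j _
    rw [integral_finset_sum _ (fun j' _ => ((integrable_gaussDensity n _).const_mul _))]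
    refine Finset.sum_congr rfl fun j' _ => ?_
    rw [integral_const_mul, integral_gaussDensity, mul_one]
  rw [Finset.sum_congr rfl this]
  have hval : ∀ j ∈ Finset.range K, ∀ j' ∈ Finset.range K,
      Real.exp ⟪μ j, μ j'⟫ = if j = j' then Real.exp S else 1 := by
    intro j hj j' hj'
    by_cases h : j = j'
    · subst h
      rw [if_pos rfl, hμ, inner_signalMean_self n d K hd γ f₀ j (Finset.mem_range.mp hj) hKd, hS]
    · rw [if_neg h, hμ, inner_signalMean_ne n d γ f₀ j j' h, Real.exp_zero]
  have hsum : (∑ j ∈ Finset.range K, ∑ j' ∈ Finset.range K,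
      (K:ℝ)⁻¹ * (K:ℝ)⁻¹ * Real.exp ⟪μ j, μ j'⟫)
      = ∑ j ∈ Finset.range K, ((K:ℝ)⁻¹ * (K:ℝ)⁻¹ * (Real.exp S - 1 + K)) := by
    refine Finset.sum_congr rfl fun j hj => ?_
    rw [← Finset.mul_sum, Finset.sum_congr rfl (fun j' hj' => by
      rw [hval j hj j' hj'])]
    have : (∑ j' ∈ Finset.range K, if j = j' then Real.exp S else 1)
        = Real.exp S - 1 + K := by
      have : ∀ j' ∈ Finset.range K, (if j = j' then Real.exp S else 1)
          = (if j' = j then Real.exp S - 1 else 0) + 1 := by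
        intro j' _
        by_cases h : j = j'
        · subst h; simp
        · rw [if_neg h, if_neg (Ne.symm h), zero_add]
      rw [Finset.sum_congr rfl this, Finset.sum_add_distrib,
        Finset.sum_ite_eq' (Finset.range K) j (fun _ => Real.exp S - 1),
        if_pos hj, Finset.sum_const, Finset.card_range, nsmul_eq_mul, mul_one]
    rw [this]
  rw [hsum, Finset.sum_const, Finset.card_range, nsmul_eq_mul]
  have hKne : (K:ℝ) ≠ 0 := Nat.cast_ne_zero.mpr hK.ne'
  field_simp
  ring
end
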